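/- Let 0 ≤ l < k, let D = D_{(k,l)}, and let b be the all-ones column vector of length k. For i = 1,…,k let C_i denote the k×k matrix obtained from D by replacing its i-th column with b. Then rank D = l+1 over ℚ; rank C_i = l for every i ∈ {1,…,l}; and rank C_i = l+1 for every i ∈ {l+1,…,k}. In particular, exactly l of the matrices C_1,…,C_k have rank l and all the others have rank l+1. -/

import Mathlib

open Matrix Submodule

/-- The square matrix `D_{(n,l)}`: `-1` on the first `l` diagonal entries, `1` elsewhere. -/
def Dmat (n l : ℕ) : Matrix (Fin n) (Fin n) ℚ :=
  fun i j => if (i : ℕ) = (j : ℕ) ∧ (j : ℕ) < l then -1 else 1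

lemma key_rank (k : ℕ) (S : Finset (Fin k)) (i0 : Fin k) (hi0 : i0 ∉ S)
    (M : Matrix (Fin k) (Fin k) ℚ)
    (hM : ∀ i j, M i j = if j ∈ S ∧ i = j then -1 else 1) :
    M.rank = S.card + 1 := by
  classical
  set b : Fin k → ℚ := fun _ => 1 with hb
  set v : (↑S ⊕ Unit) → (Fin k → ℚ) :=
    Sum.elim (fun j => Pi.single (j : Fin k) (1 : ℚ)) (fun _ => b) with hv
  have hspan : Submodule.span ℚ (Set.range Mᵀ) = Submodule.span ℚ (Set.range v) := by
    apply le_antisymm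
    · rw [Submodule.span_le]
      rintro _ ⟨j, rfl⟩
      by_cases hj : j ∈ S
      · have : Mᵀ j = v (Sum.inr ()) - (2 : ℚ) • v (Sum.inl ⟨j, hj⟩) := by
          funext i
          simp only [hv, Sum.elim_inr, Sum.elim_inl, Pi.sub_apply, Pi.smul_apply,
            transpose_apply, hM, hb, Pi.single_apply, smul_eq_mul]
          by_cases hij : i = j <;> simp [hij, hj] <;> norm_num
        rw [this]
        exact sub_mem (subset_span ⟨Sum.inr (), rfl⟩)
          (smul_mem _ _ (subset_span ⟨Sum.inl ⟨j, hj⟩, rfl⟩))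
      · have : Mᵀ j = v (Sum.inr ()) := by
          funext i
          simp only [hv, Sum.elim_inr, transpose_apply, hM, hb]
          simp [hj]
        rw [this]
        exact subset_span ⟨Sum.inr (), rfl⟩
    · rw [Submodule.span_le]
      rintro _ ⟨x, rfl⟩
      rcases x with j | u
      · have : v (Sum.inl j) = (1/2 : ℚ) • (Mᵀ i0 - Mᵀ j) := by
          funext i
          have hji0 : (j : Fin k) ≠ i0 := ne_of_mem_of_not_mem j.2 hi0
          simp only [hv, Sum.elim_inl, Pi.smul_apply, Pi.sub_apply, transpose_apply,
            hM, Pi.single_apply, smul_eq_mul]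
          have hii0 : ¬ (i0 ∈ S ∧ i = i0) := fun hc => hi0 hc.1
          rw [if_neg hii0]
          by_cases hij : i = (j : Fin k) <;> simp [hij, j.2] <;> norm_num
        rw [this]
        exact smul_mem _ _ (sub_mem (subset_span ⟨i0, rfl⟩) (subset_span ⟨j, rfl⟩))
      · have : v (Sum.inr u) = Mᵀ i0 := by
          funext i
          simp only [hv, Sum.elim_inr, transpose_apply, hM, hb]
          have : ¬ (i0 ∈ S ∧ i = i0) := fun hc => hi0 hc.1
          rw [if_neg this]
        rw [this]
        exact subset_span ⟨i0, rfl⟩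
  have hindep : LinearIndependent ℚ v := by
    rw [Fintype.linearIndependent_iff]
    intro g hg
    have h0 : ∀ x : Fin k, (∑ i, g i • v i) x = 0 := fun x => by rw [hg]; rfl
    simp only [Finset.sum_apply, Pi.smul_apply, smul_eq_mul] at h0
    have hbr : g (Sum.inr ()) = 0 := by
      have := h0 i0
      rw [Fintype.sum_sum_type] at this
      have hz : ∀ j : ↑S, g (Sum.inl j) * v (Sum.inl j) i0 = 0 := by
        intro j
        have hji0 : i0 ≠ (j : Fin k) := fun hc => hi0 (hc ▸ j.2)
        simp [hv, Pi.single_apply, hji0]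
      rw [Finset.sum_congr rfl (fun j _ => hz j)] at this
      simpa [hv, hb] using this
    intro x
    rcases x with j | u
    · have := h0 (j : Fin k)
      rw [Fintype.sum_sum_type] at this
      have hz : ∀ j' : ↑S, g (Sum.inl j') * v (Sum.inl j') (j : Fin k)
          = if j' = j then g (Sum.inl j) else 0 := by
        intro j'
        by_cases hjj : j' = j
        · simp [hv, hjj, Pi.single_apply]
        · have : (j : Fin k) ≠ (j' : Fin k) := by
            intro hc; exact hjj (Subtype.ext hc.symm)
          simp [hv, Pi.single_apply, this, hjj]
      rw [Finset.sum_congr rfl (fun j' _ => hz j')] at this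
      simp only [Finset.sum_ite_eq', Finset.mem_univ, if_true, hbr] at this
      simpa [hv, hb] using this
    · cases u; exact hbr
  rw [Matrix.rank_eq_finrank_span_cols, show span ℚ (Set.range M.col) = span ℚ (Set.range v) from hspan, finrank_span_eq_card hindep]
  simp [Fintype.card_sum]

theorem rank_Dmat_replace_column (k l : ℕ) (h : l < k) :
    (Dmat k l).rank = l + 1 ∧
      (∀ i : Fin k, (i : ℕ) < l →
        ((Dmat k l).updateCol i (fun _ => 1)).rank = l) ∧
      (∀ i : Fin k, l ≤ (i : ℕ) →
        ((Dmat k l).updateCol i (fun _ => 1)).rank = l + 1) := by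
  classical
  set S : Finset (Fin k) := Finset.univ.filter (fun j : Fin k => (j : ℕ) < l) with hS
  have hScard : S.card = l := by
    have hmap : S = Finset.map (Fin.castLEEmb h.le) Finset.univ := by
      ext j
      simp only [hS, Finset.mem_filter, Finset.mem_univ, true_and, Finset.mem_map]
      constructor
      · intro hj
        exact ⟨⟨(j : ℕ), hj⟩, Fin.ext rfl⟩
      · rintro ⟨a, -, rfl⟩
        simpa [Fin.castLEEmb, Fin.castLE] using a.2
    rw [hmap, Finset.card_map, Finset.card_univ, Fintype.card_fin]
  have hi0 : (⟨l, h⟩ : Fin k) ∉ S := by simp [hS]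
  refine ⟨?_, ?_, ?_⟩
  · rw [key_rank k S ⟨l, h⟩ hi0 _ ?_, hScard]
    intro i j
    simp only [Dmat, hS, Finset.mem_filter, Finset.mem_univ, true_and]
    refine if_congr ?_ rfl rfl
    constructor
    · rintro ⟨h1, h2⟩; exact ⟨h2, Fin.ext h1⟩
    · rintro ⟨h1, rfl⟩; exact ⟨rfl, h1⟩
  · intro i hil
    have h1l : 1 ≤ l := Nat.one_le_iff_ne_zero.mpr (by omega)
    have hi0' : (⟨l, h⟩ : Fin k) ∉ S.erase i := fun hc => hi0 (Finset.mem_of_mem_erase hc)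
    rw [key_rank k (S.erase i) ⟨l, h⟩ hi0' _ ?_, Finset.card_erase_of_mem (by simp [hS, hil])]
    · rw [hScard]; omega
    intro a j
    rw [Matrix.updateCol_apply]
    by_cases hji : j = i
    · have : j ∉ S.erase i := by simp [hji]
      simp [hji, this]
    · simp only [hji, if_false, Dmat, Finset.mem_erase, hS, Finset.mem_filter,
        Finset.mem_univ, true_and]
      refine if_congr ?_ rfl rfl
      constructor
      · rintro ⟨h1, h2⟩; exact ⟨⟨hji, h2⟩, Fin.ext h1⟩
      · rintro ⟨⟨_, h2⟩, rfl⟩; exact ⟨rfl, h2⟩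
  · intro i hil
    rw [key_rank k S ⟨l, h⟩ hi0 _ ?_, hScard]
    intro a j
    rw [Matrix.updateCol_apply]
    by_cases hji : j = i
    · have : j ∉ S := by simp [hji, hS]; omega
      subst hji; simp [this]
    · simp only [hji, if_false, Dmat, hS, Finset.mem_filter, Finset.mem_univ, true_and]
      refine if_congr ?_ rfl rfl
      constructor
      · rintro ⟨h1, h2⟩; exact ⟨h2, Fin.ext h1⟩
      · rintro ⟨h1, rfl⟩; exact ⟨rfl, h1⟩
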